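/- Let U ⊆ ℂ be open; let v : ℂ → ℂ be twice complex-differentiable on U with v(x) ≠ 0 for all x ∈ U; let w : ℂ → ℂ be complex-differentiable on U with w(x)² = v(x) for all x ∈ U; let S : ℂ → ℂ be any function; and let φ₁, φ₂ : ℂ → ℂ be twice complex-differentiable on U with φᵢ'' + ((1/2)·S + v²)·φᵢ = 0 on U for i = 1, 2. Define S_v = (v'/v)' − (1/2)·(v'/v)², u = −(S − S_v)/(2·v²) − 1, ψᵢ = φᵢ·w, and the matrix-valued function Ψ(x) = ![![ψ₁(x), ψ₂(x)],![ψ₁'(x)/v(x), ψ₂'(x)/v(x)]]. Then Ψ is complex-differentiable on U and satisfies the first-order matrix equation Ψ'(x) = ![![0, v(x)],![u(x)·v(x), 0]] · Ψ(x) for every x ∈ U. -/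

import Mathlib

/-- Entrywise complex derivative of a matrix-valued function of one complex variable. -/
noncomputable def matDeriv (F : ℂ → Matrix (Fin 2) (Fin 2) ℂ) (x : ℂ) :
    Matrix (Fin 2) (Fin 2) ℂ :=
  Matrix.of fun i j => deriv (fun y => F y i j) x

/-- `S_v = (v'/v)' − (1/2)·(v'/v)²`, the Schwarzian derivative of the flat coordinate
`z = ∫ v` with respect to the original coordinate. -/
noncomputable def Sv (v : ℂ → ℂ) (x : ℂ) : ℂ :=
  deriv (fun y => deriv v y / v y) x - (1 / 2) * (deriv v x / v x) ^ 2

/-- The potential `u = −(S − S_v)/(2·v²) − 1`. -/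
noncomputable def upot (S v : ℂ → ℂ) (x : ℂ) : ℂ :=
  -((S x - Sv v x) / (2 * v x ^ 2)) - 1

/-- The modified Wronskian matrix `Ψ(x) = ![![ψ₁, ψ₂],![ψ₁'/v, ψ₂'/v]]` built from
`ψᵢ = φᵢ·w`. -/
noncomputable def modifiedWronskian (φ₁ φ₂ w v : ℂ → ℂ) (x : ℂ) :
    Matrix (Fin 2) (Fin 2) ℂ :=
  !![φ₁ x * w x, φ₂ x * w x;
     deriv (fun y => φ₁ y * w y) x / v x, deriv (fun y => φ₂ y * w y) x / v x]

private lemma wne {U : Set ℂ} {v w : ℂ → ℂ}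
    (hvne : ∀ x ∈ U, v x ≠ 0) (hw2 : ∀ x ∈ U, w x ^ 2 = v x)
    {x : ℂ} (hx : x ∈ U) : w x ≠ 0 := by
  intro h
  exact hvne x hx (by rw [← hw2 x hx, h]; ring)

private lemma wderiv {U : Set ℂ} (hU : IsOpen U) {v w : ℂ → ℂ}
    (hvne : ∀ x ∈ U, v x ≠ 0)
    (hw : DifferentiableOn ℂ w U) (hw2 : ∀ x ∈ U, w x ^ 2 = v x)
    {x : ℂ} (hx : x ∈ U) :
    HasDerivAt w (deriv v x / (2 * w x)) x := by
  have hmem := hU.mem_nhds hx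
  have hwx : DifferentiableAt ℂ w x := (hw x hx).differentiableAt hmem
  have hwne : w x ≠ 0 := wne hvne hw2 hx
  have h1 : HasDerivAt (fun y => w y ^ 2) (2 * w x * deriv w x) x := by
    simpa [pow_one] using hwx.hasDerivAt.fun_pow 2
  have h2 : HasDerivAt v (2 * w x * deriv w x) x := by
    refine h1.congr_of_eventuallyEq ?_
    filter_upwards [hmem] with y hy using (hw2 y hy).symm
  have h3 : deriv v x = 2 * w x * deriv w x := h2.deriv
  have h4 : deriv v x / (2 * w x) = deriv w x := by
    rw [h3]; field_simp
  rw [h4]; exact hwx.hasDerivAt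

private lemma psideriv {U : Set ℂ} (hU : IsOpen U) {v w φ : ℂ → ℂ}
    (hvne : ∀ x ∈ U, v x ≠ 0)
    (hw : DifferentiableOn ℂ w U) (hw2 : ∀ x ∈ U, w x ^ 2 = v x)
    (hφ : DifferentiableOn ℂ φ U)
    {x : ℂ} (hx : x ∈ U) :
    HasDerivAt (fun y => φ y * w y)
      (deriv φ x * w x + φ x * (deriv v x / (2 * w x))) x :=
  (((hφ x hx).differentiableAt (hU.mem_nhds hx)).hasDerivAt).mul
    (wderiv hU hvne hw hw2 hx)

private lemma upot_def (S v : ℂ → ℂ) (x : ℂ) :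
    (-((S x - (deriv (fun y => deriv v y / v y) x - (1 / 2) * (deriv v x / v x) ^ 2)) / (2 * v x ^ 2)) - 1) = (-((S x - (deriv (fun y => deriv v y / v y) x - (1 / 2) * (deriv v x / v x) ^ 2)) / (2 * v x ^ 2)) - 1) := rfl

private lemma row2 {U : Set ℂ} (hU : IsOpen U) {v w S φ : ℂ → ℂ}
    (hv : DifferentiableOn ℂ v U) (hv' : DifferentiableOn ℂ (deriv v) U)
    (hvne : ∀ x ∈ U, v x ≠ 0)
    (hw : DifferentiableOn ℂ w U) (hw2 : ∀ x ∈ U, w x ^ 2 = v x)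
    (hφ : DifferentiableOn ℂ φ U) (hφ' : DifferentiableOn ℂ (deriv φ) U)
    (heq : ∀ x ∈ U, deriv (deriv φ) x + ((1 / 2) * S x + v x ^ 2) * φ x = 0)
    {x : ℂ} (hx : x ∈ U) :
    HasDerivAt (fun y => deriv (fun z => φ z * w z) y / v y)
      ((-((S x - Sv v x) / (2 * v x ^ 2)) - 1) * v x * (φ x * w x)) x := by
  have hmem := hU.mem_nhds hx
  have hwne : w x ≠ 0 := wne hvne hw2 hx
  have hvx : v x ≠ 0 := hvne x hx
  have h2wne : (2 : ℂ) * w x ≠ 0 := by simp [hwne]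
  have hvAt : HasDerivAt v (deriv v x) x :=
    ((hv x hx).differentiableAt hmem).hasDerivAt
  have hv'At : HasDerivAt (deriv v) (deriv (deriv v) x) x :=
    ((hv' x hx).differentiableAt hmem).hasDerivAt
  have hφAt : HasDerivAt φ (deriv φ x) x :=
    ((hφ x hx).differentiableAt hmem).hasDerivAt
  have hφ'At : HasDerivAt (deriv φ) (deriv (deriv φ) x) x :=
    ((hφ' x hx).differentiableAt hmem).hasDerivAt
  have hwAt : HasDerivAt w (deriv v x / (2 * w x)) x := wderiv hU hvne hw hw2 hx
  have h2w : HasDerivAt (fun y => 2 * w y) (2 * (deriv v x / (2 * w x))) x :=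
    hwAt.const_mul 2
  have h3 : HasDerivAt (fun y => deriv v y / (2 * w y))
      ((deriv (deriv v) x * (2 * w x) - deriv v x * (2 * (deriv v x / (2 * w x)))) / (2 * w x) ^ 2) x :=
    hv'At.div h2w h2wne
  have hg : HasDerivAt (fun y => deriv φ y * w y + φ y * (deriv v y / (2 * w y)))
      ((deriv (deriv φ) x * w x + deriv φ x * (deriv v x / (2 * w x)))
        + (deriv φ x * (deriv v x / (2 * w x)) + φ x *
          ((deriv (deriv v) x * (2 * w x) - deriv v x * (2 * (deriv v x / (2 * w x)))) / (2 * w x) ^ 2))) x :=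
    (hφ'At.mul hwAt).add (hφAt.mul h3)
  have hgq : HasDerivAt (fun y => (deriv φ y * w y + φ y * (deriv v y / (2 * w y))) / v y)
      ((((deriv (deriv φ) x * w x + deriv φ x * (deriv v x / (2 * w x)))
        + (deriv φ x * (deriv v x / (2 * w x)) + φ x *
          ((deriv (deriv v) x * (2 * w x) - deriv v x * (2 * (deriv v x / (2 * w x)))) / (2 * w x) ^ 2))) * v x
        - (deriv φ x * w x + φ x * (deriv v x / (2 * w x))) * deriv v x) / v x ^ 2) x :=
    hg.div hvAt hvx
  have hkey : HasDerivAt (fun y => deriv (fun z => φ z * w z) y / v y)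
      ((((deriv (deriv φ) x * w x + deriv φ x * (deriv v x / (2 * w x)))
        + (deriv φ x * (deriv v x / (2 * w x)) + φ x *
          ((deriv (deriv v) x * (2 * w x) - deriv v x * (2 * (deriv v x / (2 * w x)))) / (2 * w x) ^ 2))) * v x
        - (deriv φ x * w x + φ x * (deriv v x / (2 * w x))) * deriv v x) / v x ^ 2) x := by
    refine hgq.congr_of_eventuallyEq ?_
    filter_upwards [hmem] with y hy
    rw [(psideriv hU hvne hw hw2 hφ hy).deriv]
  have hvv : HasDerivAt (fun y => deriv v y / v y)
      ((deriv (deriv v) x * v x - deriv v x * deriv v x) / v x ^ 2) x :=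
    hv'At.div hvAt hvx
  have hSv : Sv v x
      = (deriv (deriv v) x * v x - deriv v x * deriv v x) / v x ^ 2
        - (1 / 2) * (deriv v x / v x) ^ 2 := by
    rw [Sv, hvv.deriv]
  have hc'' : deriv (deriv φ) x = -((1 / 2) * S x + v x ^ 2) * φ x := by
    have := heq x hx; linear_combination this
  have ha : v x = w x ^ 2 := (hw2 x hx).symm
  have hD : (((deriv (deriv φ) x * w x + deriv φ x * (deriv v x / (2 * w x)))
        + (deriv φ x * (deriv v x / (2 * w x)) + φ x *
          ((deriv (deriv v) x * (2 * w x) - deriv v x * (2 * (deriv v x / (2 * w x)))) / (2 * w x) ^ 2))) * v x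
        - (deriv φ x * w x + φ x * (deriv v x / (2 * w x))) * deriv v x) / v x ^ 2
      = (-((S x - Sv v x) / (2 * v x ^ 2)) - 1) * v x * (φ x * w x) := by
    have hdw : deriv w x = deriv v x / (2 * w x) := hwAt.deriv
    have hdv : deriv v x = 2 * w x * deriv w x := by
      rw [hdw]; field_simp
    rw [hSv, hc'', ha, hdv]
    field_simp [hwne]
    ring
  rw [← hD]
  exact hkey

/-- With `v` twice complex-differentiable and nonvanishing on an open
`U ⊆ ℂ`, `w² = v` with `w` complex-differentiable, and `φ₁, φ₂` twice
complex-differentiable solutions of `φ'' + ((1/2)·S + v²)·φ = 0` on `U`, the modified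
Wronskian matrix `Ψ = ![![ψ₁, ψ₂],![ψ₁'/v, ψ₂'/v]]` (with `ψᵢ = φᵢ·w`) is
complex-differentiable entrywise on `U` and satisfies
`Ψ' = ![![0, v],![u·v, 0]]·Ψ` on `U`, where `u = −(S − S_v)/(2·v²) − 1`. -/
theorem schroedinger_to_first_order_matrix
    (U : Set ℂ) (hU : IsOpen U)
    (v w S φ₁ φ₂ : ℂ → ℂ)
    (hv : DifferentiableOn ℂ v U) (hv' : DifferentiableOn ℂ (deriv v) U)
    (hvne : ∀ x ∈ U, v x ≠ 0)
    (hw : DifferentiableOn ℂ w U)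
    (hw2 : ∀ x ∈ U, w x ^ 2 = v x)
    (hφ₁ : DifferentiableOn ℂ φ₁ U) (hφ₁' : DifferentiableOn ℂ (deriv φ₁) U)
    (hφ₂ : DifferentiableOn ℂ φ₂ U) (hφ₂' : DifferentiableOn ℂ (deriv φ₂) U)
    (heq₁ : ∀ x ∈ U, deriv (deriv φ₁) x + ((1 / 2) * S x + v x ^ 2) * φ₁ x = 0)
    (heq₂ : ∀ x ∈ U, deriv (deriv φ₂) x + ((1 / 2) * S x + v x ^ 2) * φ₂ x = 0) :
    (∀ i j, DifferentiableOn ℂ (fun y => modifiedWronskian φ₁ φ₂ w v y i j) U) ∧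
    ∀ x ∈ U,
      matDeriv (modifiedWronskian φ₁ φ₂ w v) x
        = !![0, v x; upot S v x * v x, 0] * modifiedWronskian φ₁ φ₂ w v x := by
  
  have hrow1 : ∀ (φ : ℂ → ℂ), DifferentiableOn ℂ φ U →
      DifferentiableOn ℂ (fun y => φ y * w y) U := fun φ hφ => hφ.mul hw
  constructor
  · intro i j
    fin_cases i <;> fin_cases j
    · simpa [modifiedWronskian] using hrow1 φ₁ hφ₁
    · simpa [modifiedWronskian] using hrow1 φ₂ hφ₂
    · have : DifferentiableOn ℂ (fun y => deriv (fun z => φ₁ z * w z) y / v y) U :=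
        fun x hx => ((row2 hU hv hv' hvne hw hw2 hφ₁ hφ₁' heq₁ hx).differentiableAt).differentiableWithinAt
      simpa [modifiedWronskian] using this
    · have : DifferentiableOn ℂ (fun y => deriv (fun z => φ₂ z * w z) y / v y) U :=
        fun x hx => ((row2 hU hv hv' hvne hw hw2 hφ₂ hφ₂' heq₂ hx).differentiableAt).differentiableWithinAt
      simpa [modifiedWronskian] using this
  · intro x hx
    have hvx : v x ≠ 0 := hvne x hx
    ext i j
    fin_cases i <;> fin_cases j <;>
      simp [matDeriv, modifiedWronskian, Matrix.mul_apply, Fin.sum_univ_two,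
        Fin.mk_zero, Fin.mk_one]
    · field_simp
    · field_simp
    · rw [(row2 hU hv hv' hvne hw hw2 hφ₁ hφ₁' heq₁ hx).deriv, upot]
    · rw [(row2 hU hv hv' hvne hw hw2 hφ₂ hφ₂' heq₂ hx).deriv, upot]
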